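/- Let p ≥ 2 be an integer and let L̄ be the reduced Laplacian of the cone over the left comb tree T_p (with rows and columns indexed by π_1,…,π_p,ℓ_1,…,ℓ_{p−1} as in the context). Then the determinant of the (2p−2)×(2p−2) matrix obtained from L̄ by deleting the row and the column indexed by π_1 is an odd integer. -/

import Mathlib

/-- The reduced Laplacian of the cone over the left comb tree `T_p`, written
out explicitly: `Sum.inl i` is the spine vertex `π_{i+1}` (for `0 ≤ i < p`)
and `Sum.inr j` is the leaf `ℓ_{j+1}` (for `0 ≤ j < p-1`). -/
def combLap (p : ℕ) : Matrix (Fin p ⊕ Fin (p - 1)) (Fin p ⊕ Fin (p - 1)) ℤ :=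
  fun u v =>
    match u, v with
    | Sum.inl i, Sum.inl j =>
        if i = j then
          (if (i : ℕ) = 0 then 2 else if (i : ℕ) = p - 1 then 3 else 4)
        else if (i : ℕ) + 1 = (j : ℕ) ∨ (j : ℕ) + 1 = (i : ℕ) then -1 else 0
    | Sum.inl i, Sum.inr j => if (i : ℕ) = (j : ℕ) + 1 then -1 else 0
    | Sum.inr j, Sum.inl i => if (i : ℕ) = (j : ℕ) + 1 then -1 else 0
    | Sum.inr i, Sum.inr j => if i = j then 2 else 0

/-- The inclusion of the vertices other than `π_1`: `Sum.inl i ↦ π_{i+2}` and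
`Sum.inr j ↦ ℓ_{j+1}`. -/
def delPiOne (p : ℕ) : Fin (p - 1) ⊕ Fin (p - 1) → Fin p ⊕ Fin (p - 1)
  | Sum.inl i => Sum.inl ⟨(i : ℕ) + 1, by have := i.isLt; omega⟩
  | Sum.inr j => Sum.inr j

/-- For `p ≥ 2`, the determinant of the matrix obtained from
the reduced Laplacian of `Cone(T_p)` by deleting the row and column indexed by
`π_1` is odd. -/
theorem combLap_minor_pi_one_odd (p : ℕ) (hp : 2 ≤ p) :
    Odd ((combLap p).submatrix (delPiOne p) (delPiOne p)).det := by
  set M := (combLap p).submatrix (delPiOne p) (delPiOne p) with hM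
  let f := Int.castRingHom (ZMod 2)
  let A : Matrix (Fin (p - 1)) (Fin (p - 1)) (ZMod 2) :=
    fun i j => f (M (Sum.inl i) (Sum.inl j))
  have hblock : M.map f = Matrix.fromBlocks A 1 1 0 := by
    ext u v
    cases u with
    | inl i =>
      cases v with
      | inl j => rfl
      | inr j =>
        simp only [Matrix.map_apply, hM, Matrix.submatrix_apply, delPiOne, combLap,
          Matrix.fromBlocks_apply₁₂, Matrix.one_apply]
        by_cases h : i = j
        · subst h; simp
        · have : ¬ ((i : ℕ) + 1 = (j : ℕ) + 1) := by
            intro hc; exact h (Fin.ext (by omega))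
          simp [this, h]
          exact fun hc => h (Fin.ext hc)
    | inr i =>
      cases v with
      | inl j =>
        simp only [Matrix.map_apply, hM, Matrix.submatrix_apply, delPiOne, combLap,
          Matrix.fromBlocks_apply₂₁, Matrix.one_apply]
        by_cases h : i = j
        · subst h; simp
        · have : ¬ ((j : ℕ) + 1 = (i : ℕ) + 1) := by
            intro hc; exact h (Fin.ext (by omega))
          simp [this, h]
          exact fun hc => h (Fin.ext hc.symm)
      | inr j =>
        simp only [Matrix.map_apply, hM, Matrix.submatrix_apply, delPiOne, combLap,
          Matrix.fromBlocks_apply₂₂, Matrix.zero_apply]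
        by_cases h : i = j
        · subst h; simp; decide
        · simp [h]
  set I1 : Matrix (Fin (p-1)) (Fin (p-1)) (ZMod 2) := 1 with hI1
  set Z : Matrix (Fin (p-1)) (Fin (p-1)) (ZMod 2) := 0 with hZ
  have hfac : Matrix.fromBlocks A I1 I1 Z =
      Matrix.fromBlocks I1 A Z I1 * Matrix.fromBlocks Z I1 I1 Z := by
    rw [Matrix.fromBlocks_multiply]
    congr 1 <;> simp [hI1, hZ]
  have hD : (Matrix.fromBlocks Z I1 I1 Z).det = 1 := by
    have hsq : Matrix.fromBlocks Z I1 I1 Z * Matrix.fromBlocks Z I1 I1 Z = 1 := by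
      rw [Matrix.fromBlocks_multiply, ← Matrix.fromBlocks_one]
      congr 1 <;> simp [hI1, hZ]
    have h1 : (Matrix.fromBlocks Z I1 I1 Z).det * (Matrix.fromBlocks Z I1 I1 Z).det = 1 := by
      rw [← Matrix.det_mul, hsq, Matrix.det_one]
    revert h1
    generalize (Matrix.fromBlocks Z I1 I1 Z).det = x
    revert x; decide
  have hdet : f M.det = 1 := by
    have : (M.map f).det = f M.det := (RingHom.map_det f M).symm
    rw [← this, hblock, hfac, Matrix.det_mul, hD, hZ,
      Matrix.det_fromBlocks_zero₂₁, hI1, Matrix.det_one]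
    ring
  have h2 : ¬ ((2 : ℤ) ∣ M.det) := by
    intro hdvd
    have : ((M.det : ℤ) : ZMod 2) = 0 := (ZMod.intCast_zmod_eq_zero_iff_dvd M.det 2).2 hdvd
    rw [show ((M.det : ℤ) : ZMod 2) = f M.det from rfl, hdet] at this
    exact one_ne_zero this
  rw [Int.odd_iff]
  omega
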